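/- Let d ≥ 1, let a be a jump kernel and b a rate-perturbation kernel, let ω ≥ 0, and let ϑ'' < ϑ be real numbers. Then for every correlation-type function k with ‖k‖_{ϑ''} < ∞: ‖C^{Δ,ω} k‖_ϑ ≤ ((ω + ⟨b⟩ e^{ϑ}) / (e(ϑ − ϑ''))) ‖k‖_{ϑ''} and ‖D^Δ k‖_ϑ ≤ (⟨b⟩ e^{ϑ} / (e(ϑ − ϑ''))) ‖k‖_{ϑ''}; hence C^{Δ,ω} and D^Δ define bounded linear operators from K_{ϑ''} to K_ϑ with these operator-norm bounds. (Estimates (4.12) of the paper.) -/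

import Mathlib

open MeasureTheory ENNReal Real Filter Finset

namespace Kawasaki

abbrev Rd (d : ℕ) := Fin d → ℝ

structure JumpKernel (d : ℕ) where
  a : Rd d → Rd d → ℝ
  measurable : Measurable fun p : Rd d × Rd d => a p.1 p.2
  nonneg : ∀ x y, 0 ≤ a x y
  symm : ∀ x y, a x y = a y x
  integrable : ∀ y, Integrable fun x => a x y
  sup_integral : (⨆ y : Rd d, ∫ x, a x y) = 1

structure RateKernel (d : ℕ) where
  b : Rd d → Rd d → Rd d → ℝ
  measurable : Measurable fun p : Rd d × Rd d × Rd d => b p.1 p.2.1 p.2.2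
  nonneg : ∀ x y z, 0 ≤ b x y z
  integrable : ∀ x y, Integrable fun z => b x y z
  int_bddAbove : BddAbove (Set.range fun p : Rd d × Rd d => ∫ z, b p.1 p.2 z)
  bddAbove : BddAbove (Set.range fun p : Rd d × Rd d × Rd d => b p.1 p.2.1 p.2.2)

/-- ⟨b⟩ -/
noncomputable def RateKernel.avg {d : ℕ} (B : RateKernel d) : ℝ :=
  ⨆ p : Rd d × Rd d, ∫ z, B.b p.1 p.2 z

/-- b̄ -/
noncomputable def RateKernel.bbar {d : ℕ} (B : RateKernel d) : ℝ :=
  ⨆ p : Rd d × Rd d × Rd d, B.b p.1 p.2.1 p.2.2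

abbrev Fam (d : ℕ) := ∀ n : ℕ, (Fin n → Rd d) → ℝ

structure CorrFun (d : ℕ) where
  k : Fam d
  measurable : ∀ n, Measurable (k n)
  symm : ∀ (n : ℕ) (σ : Equiv.Perm (Fin n)) (x : Fin n → Rd d), k n (x ∘ σ) = k n x

noncomputable def esssupAbs (d n : ℕ) (f : (Fin n → Rd d) → ℝ) : ℝ≥0∞ :=
  essSup (fun x => ENNReal.ofReal |f x|) volume

noncomputable def famNorm (d : ℕ) (f : Fam d) (ϑ : ℝ) : ℝ≥0∞ :=
  ⨆ n : ℕ, ENNReal.ofReal (Real.exp (-ϑ * n)) * esssupAbs d n (f n)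

noncomputable def phiPlus (d : ℕ) (A : JumpKernel d) (B : RateKernel d) (x y : Rd d) : ℝ :=
  ∫ z, A.a z x * B.b z x y

noncomputable def phiMinus (d : ℕ) (A : JumpKernel d) (B : RateKernel d) (x y : Rd d) : ℝ :=
  ∫ z, A.a x z * B.b x z y

noncomputable def PhiPlus (d : ℕ) (A : JumpKernel d) (B : RateKernel d) (n : ℕ)
    (x : Fin n → Rd d) : ℝ :=
  ∑ i : Fin n, ∑ j ∈ Finset.univ.erase i, phiPlus d A B (x i) (x j)

noncomputable def PhiMinus (d : ℕ) (A : JumpKernel d) (B : RateKernel d) (n : ℕ)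
    (x : Fin n → Rd d) : ℝ :=
  ∑ i : Fin n, ∑ j ∈ Finset.univ.erase i, phiMinus d A B (x i) (x j)

noncomputable def Psi (d : ℕ) (A : JumpKernel d) (B : RateKernel d) (n : ℕ)
    (x : Fin n → Rd d) : ℝ :=
  (∑ i : Fin n, ∫ y, A.a (x i) y) + PhiMinus d A B n x

noncomputable def ADelta (d : ℕ) (A : JumpKernel d) (B : RateKernel d) (k : Fam d) : Fam d :=
  fun n x => ∑ i : Fin n, ∫ x',
    A.a x' (x i) * (1 + ∑ j ∈ Finset.univ.erase i, B.b x' (x i) (x j)) *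
      k n (Function.update x i x')

noncomputable def BDelta (d : ℕ) (A : JumpKernel d) (B : RateKernel d) (k : Fam d) : Fam d :=
  fun n x => -(Psi d A B n x) * k n x

noncomputable def BDeltaOmega (d : ℕ) (A : JumpKernel d) (B : RateKernel d) (ω : ℝ)
    (k : Fam d) : Fam d :=
  fun n x => -(Psi d A B n x + ω * n) * k n x

noncomputable def CDelta (d : ℕ) (A : JumpKernel d) (B : RateKernel d) (k : Fam d) : Fam d :=
  fun n x => ∑ i : Fin n, ∫ x', ∫ z,
    A.a x' (x i) * B.b x' (x i) z * k (n + 1) (Fin.snoc (Function.update x i x') z)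

noncomputable def CDeltaOmega (d : ℕ) (A : JumpKernel d) (B : RateKernel d) (ω : ℝ)
    (k : Fam d) : Fam d :=
  fun n x => CDelta d A B k n x + ω * n * k n x

noncomputable def DDelta (d : ℕ) (A : JumpKernel d) (B : RateKernel d) (k : Fam d) : Fam d :=
  fun n x => -∫ z, (∑ i : Fin n, ∫ y, A.a (x i) y * B.b (x i) y z) * k (n + 1) (Fin.snoc x z)

noncomputable def LDelta (d : ℕ) (A : JumpKernel d) (B : RateKernel d) (k : Fam d) : Fam d :=
  fun n x => ADelta d A B k n x + BDelta d A B k n x + CDelta d A B k n x + DDelta d A B k n x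



/-! ### Auxiliary lemmas -/

section Aux

variable {d : ℕ}

lemma ae_comp_qmp {α β : Type*} [MeasurableSpace α] [MeasurableSpace β]
    {μ : Measure α} {ν : Measure β} {f : α → β}
    (hf : Measure.QuasiMeasurePreserving f μ ν) {P : β → Prop}
    (h : ∀ᵐ y ∂ν, P y) : ∀ᵐ x ∂μ, P (f x) := by
  rw [ae_iff] at h ⊢
  exact hf.preimage_null h

lemma ae_snoc {n : ℕ} {P : (Fin (n + 1) → Rd d) → Prop}
    (h : ∀ᵐ y : Fin (n + 1) → Rd d, P y) :
    ∀ᵐ x : Fin n → Rd d, ∀ᵐ z : Rd d, P (Fin.snoc x z) := by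
  set e := MeasurableEquiv.piFinSuccAbove (fun _ : Fin (n + 1) => Rd d) (Fin.last n) with he
  have hmp : MeasurePreserving e := volume_preserving_piFinSuccAbove _ _
  have h2 : ∀ᵐ p : Rd d × (Fin n → Rd d), P (e.symm p) :=
    ae_comp_qmp (hmp.symm e).quasiMeasurePreserving h
  have hswap : MeasurePreserving (Prod.swap : ((Fin n → Rd d) × Rd d) → (Rd d × (Fin n → Rd d)))
      volume volume := by
    rw [Measure.volume_eq_prod, Measure.volume_eq_prod]
    exact Measure.measurePreserving_swap
  have h3 := ae_comp_qmp hswap.quasiMeasurePreserving h2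
  rw [Measure.volume_eq_prod] at h3
  have h4 := Measure.ae_ae_of_ae_prod h3
  filter_upwards [h4] with x hx
  filter_upwards [hx] with z hz
  have hpt : e.symm (Prod.swap (x, z)) = Fin.snoc x z := by
    simp only [Prod.swap_prod_mk, he, MeasurableEquiv.piFinSuccAbove_symm_apply]
    exact Fin.insertNth_last' z x
  rwa [hpt] at hz

lemma update_eq_insertNth {β : Type*} {m : ℕ} (i : Fin (m + 1)) (x : Fin (m + 1) → β) (v : β) :
    Function.update x i v = Fin.insertNth i v (fun j => x (i.succAbove j)) := by
  funext kk
  rcases eq_or_ne kk i with rfl | hk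
  · simp
  · obtain ⟨j, rfl⟩ := Fin.exists_succAbove_eq hk
    simp [Function.update_of_ne (i.succAbove_ne j)]

lemma ae_update {n : ℕ} (i : Fin n) {P : (Fin n → Rd d) → Prop}
    (h : ∀ᵐ y : Fin n → Rd d, P y) :
    ∀ᵐ x : Fin n → Rd d, ∀ᵐ v : Rd d, P (Function.update x i v) := by
  rcases n with _ | m
  · exact i.elim0
  set e := MeasurableEquiv.piFinSuccAbove (fun _ : Fin (m + 1) => Rd d) i with he
  have hmp : MeasurePreserving e := volume_preserving_piFinSuccAbove _ _
  have h2 : ∀ᵐ p : Rd d × (Fin m → Rd d), P (e.symm p) :=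
    ae_comp_qmp (hmp.symm e).quasiMeasurePreserving h
  have hswap : MeasurePreserving (Prod.swap : ((Fin m → Rd d) × Rd d) → (Rd d × (Fin m → Rd d)))
      volume volume := by
    rw [Measure.volume_eq_prod, Measure.volume_eq_prod]
    exact Measure.measurePreserving_swap
  have h3 := ae_comp_qmp hswap.quasiMeasurePreserving h2
  rw [Measure.volume_eq_prod] at h3
  have h4 := Measure.ae_ae_of_ae_prod h3
  have hsnd : Measure.QuasiMeasurePreserving
      (Prod.snd : Rd d × (Fin m → Rd d) → (Fin m → Rd d)) volume volume := by
    refine ⟨measurable_snd, ?_⟩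
    rw [Measure.volume_eq_prod, Measure.map_snd_prod]
    exact Measure.smul_absolutelyContinuous
  have hq : Measure.QuasiMeasurePreserving (fun x : Fin (m + 1) → Rd d => (e x).2)
      volume volume := hsnd.comp hmp.quasiMeasurePreserving
  have h5 := ae_comp_qmp hq h4
  filter_upwards [h5] with x hx
  filter_upwards [hx] with v hv
  have hpt : e.symm (Prod.swap ((e x).2, v)) = Function.update x i v := by
    simp only [Prod.swap_prod_mk, he, MeasurableEquiv.piFinSuccAbove_symm_apply]
    exact (update_eq_insertNth i x v).symm
  rwa [hpt] at hv

lemma JumpKernel.bddAbove_int (A : JumpKernel d) :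
    BddAbove (Set.range fun y => ∫ x, A.a x y) := by
  by_contra h
  have h0 := Real.iSup_of_not_bddAbove h
  rw [A.sup_integral] at h0
  norm_num at h0

lemma JumpKernel.int_le_one (A : JumpKernel d) (y : Rd d) : ∫ x, A.a x y ≤ 1 :=
  A.sup_integral ▸ le_ciSup A.bddAbove_int y

lemma JumpKernel.integrable' (A : JumpKernel d) (x : Rd d) :
    Integrable fun y => A.a x y := by
  have hfun : (fun y => A.a x y) = fun y => A.a y x := funext fun y => A.symm x y
  rw [hfun]; exact A.integrable x

lemma JumpKernel.int_right_le_one (A : JumpKernel d) (x : Rd d) : ∫ y, A.a x y ≤ 1 := by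
  have hfun : (fun y => A.a x y) = fun y => A.a y x := funext fun y => A.symm x y
  rw [hfun]; exact A.int_le_one x

lemma RateKernel.int_le_avg (B : RateKernel d) (x y : Rd d) : ∫ z, B.b x y z ≤ B.avg :=
  le_ciSup B.int_bddAbove (x, y)

lemma RateKernel.avg_nonneg (B : RateKernel d) : 0 ≤ B.avg :=
  (integral_nonneg fun z => B.nonneg 0 0 z).trans (B.int_le_avg 0 0)

lemma ofReal_integral_le {α : Type*} [MeasurableSpace α] (μ : Measure α) (f : α → ℝ)
    (hf : ∀ a, 0 ≤ f a) :
    ENNReal.ofReal (∫ a, f a ∂μ) ≤ ∫⁻ a, ENNReal.ofReal (f a) ∂μ := by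
  by_cases h : Integrable f μ
  · rw [ofReal_integral_eq_lintegral_ofReal h (Filter.Eventually.of_forall hf)]
  · rw [integral_undef h]; simp

lemma mul_exp_neg_le (α t : ℝ) (hα : 0 < α) (ht : 0 ≤ t) :
    t * Real.exp (-(α * t)) ≤ 1 / (Real.exp 1 * α) := by
  have h1 : α * t ≤ Real.exp (α * t - 1) := by
    have := Real.add_one_le_exp (α * t - 1); linarith
  have h2 : α * t * Real.exp (-(α * t)) ≤ Real.exp (-1) := by
    calc α * t * Real.exp (-(α * t)) ≤ Real.exp (α * t - 1) * Real.exp (-(α * t)) :=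
          mul_le_mul_of_nonneg_right h1 (Real.exp_pos _).le
      _ = Real.exp (-1) := by rw [← Real.exp_add]; ring_nf
  have hepos := Real.exp_pos 1
  have he : Real.exp (-1) = 1 / Real.exp 1 := by
    rw [Real.exp_neg]; exact (one_div _).symm
  rw [he] at h2
  have h3 := (le_div_iff₀ hepos).1 h2
  rw [le_div_iff₀ (by positivity)]
  calc t * Real.exp (-(α * t)) * (Real.exp 1 * α)
      = α * t * Real.exp (-(α * t)) * Real.exp 1 := by ring
    _ ≤ 1 := h3

lemma esssupAbs_le {n : ℕ} (f : (Fin n → Rd d) → ℝ) {c : ℝ≥0∞}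
    (h : ∀ᵐ x : Fin n → Rd d, ENNReal.ofReal |f x| ≤ c) : esssupAbs d n f ≤ c := by
  rw [esssupAbs]
  exact essSup_le_of_ae_le c h

lemma cdelta_ae_bound (A : JumpKernel d) (B : RateKernel d) (k : Fam d) (n : ℕ)
    {C : ℝ} (hC0 : 0 ≤ C)
    (hK : ∀ᵐ y : Fin (n + 1) → Rd d, |k (n + 1) y| ≤ C) :
    ∀ᵐ x : Fin n → Rd d,
      ENNReal.ofReal |CDelta d A B k n x| ≤ (n : ℝ≥0∞) * ENNReal.ofReal (B.avg * C) := by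
  have hae : ∀ᵐ x : Fin n → Rd d, ∀ i : Fin n, ∀ᵐ v : Rd d, ∀ᵐ z : Rd d,
      |k (n + 1) (Fin.snoc (Function.update x i v) z)| ≤ C := by
    rw [ae_all_iff]
    intro i
    exact ae_update i (ae_snoc hK)
  filter_upwards [hae] with x hx
  unfold CDelta
  calc ENNReal.ofReal |∑ i : Fin n, ∫ x', ∫ z,
        A.a x' (x i) * B.b x' (x i) z * k (n + 1) (Fin.snoc (Function.update x i x') z)|
      ≤ ∑ i : Fin n, ENNReal.ofReal |∫ x', ∫ z,
        A.a x' (x i) * B.b x' (x i) z * k (n + 1) (Fin.snoc (Function.update x i x') z)| := by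
        refine le_trans (ENNReal.ofReal_le_ofReal (Finset.abs_sum_le_sum_abs _ _)) ?_
        rw [ENNReal.ofReal_sum_of_nonneg fun i _ => abs_nonneg _]
    _ ≤ ∑ _i : Fin n, ENNReal.ofReal (B.avg * C) := by
        refine Finset.sum_le_sum fun i _ => ?_
        calc ENNReal.ofReal |∫ x', ∫ z, A.a x' (x i) * B.b x' (x i) z *
                k (n + 1) (Fin.snoc (Function.update x i x') z)|
            ≤ ∫⁻ x', ‖∫ z, A.a x' (x i) * B.b x' (x i) z *
                k (n + 1) (Fin.snoc (Function.update x i x') z)‖₊ := by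
              rw [← Real.norm_eq_abs, ofReal_norm]
              exact enorm_integral_le_lintegral_enorm _
          _ ≤ ∫⁻ x', ENNReal.ofReal (A.a x' (x i)) * ENNReal.ofReal (B.avg * C) := by
              refine lintegral_mono_ae ?_
              filter_upwards [hx i] with v hv
              calc (‖∫ z, A.a v (x i) * B.b v (x i) z *
                      k (n + 1) (Fin.snoc (Function.update x i v) z)‖₊ : ℝ≥0∞)
                  ≤ ∫⁻ z, ‖A.a v (x i) * B.b v (x i) z *
                      k (n + 1) (Fin.snoc (Function.update x i v) z)‖₊ :=
                    enorm_integral_le_lintegral_enorm _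
                _ ≤ ∫⁻ z, ENNReal.ofReal (A.a v (x i)) *
                      (ENNReal.ofReal (B.b v (x i) z) * ENNReal.ofReal C) := by
                    refine lintegral_mono_ae ?_
                    filter_upwards [hv] with z hz
                    rw [← enorm_eq_nnnorm, ← ofReal_norm, Real.norm_eq_abs, abs_mul, abs_mul,
                      abs_of_nonneg (A.nonneg _ _), abs_of_nonneg (B.nonneg _ _ _),
                      ENNReal.ofReal_mul (mul_nonneg (A.nonneg _ _) (B.nonneg _ _ _)),
                      ENNReal.ofReal_mul (A.nonneg _ _), mul_assoc]
                    exact mul_le_mul_right (mul_le_mul_right (ENNReal.ofReal_le_ofReal hz) _) _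
                _ = ENNReal.ofReal (A.a v (x i)) *
                      ((∫⁻ z, ENNReal.ofReal (B.b v (x i) z)) * ENNReal.ofReal C) := by
                    rw [lintegral_const_mul' _ _ ENNReal.ofReal_ne_top,
                      lintegral_mul_const' _ _ ENNReal.ofReal_ne_top]
                _ ≤ ENNReal.ofReal (A.a v (x i)) * ENNReal.ofReal (B.avg * C) := by
                    refine mul_le_mul_right ?_ _
                    rw [ENNReal.ofReal_mul B.avg_nonneg]
                    refine mul_le_mul_left ?_ _
                    rw [← ofReal_integral_eq_lintegral_ofReal (B.integrable _ _)
                      (Filter.Eventually.of_forall fun z => B.nonneg _ _ _)]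
                    exact ENNReal.ofReal_le_ofReal (B.int_le_avg _ _)
          _ = (∫⁻ x', ENNReal.ofReal (A.a x' (x i))) * ENNReal.ofReal (B.avg * C) :=
              lintegral_mul_const' _ _ ENNReal.ofReal_ne_top
          _ ≤ 1 * ENNReal.ofReal (B.avg * C) := by
              refine mul_le_mul_left ?_ _
              rw [← ofReal_integral_eq_lintegral_ofReal (A.integrable (x i))
                (Filter.Eventually.of_forall fun x' => A.nonneg _ _)]
              calc ENNReal.ofReal (∫ x', A.a x' (x i)) ≤ ENNReal.ofReal 1 :=
                    ENNReal.ofReal_le_ofReal (A.int_le_one (x i))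
                _ = 1 := ENNReal.ofReal_one
          _ = ENNReal.ofReal (B.avg * C) := one_mul _
    _ = (n : ℝ≥0∞) * ENNReal.ofReal (B.avg * C) := by
        simp [Finset.sum_const, nsmul_eq_mul]

lemma ddelta_ae_bound (A : JumpKernel d) (B : RateKernel d) (k : Fam d) (n : ℕ)
    {C : ℝ} (hC0 : 0 ≤ C)
    (hK : ∀ᵐ y : Fin (n + 1) → Rd d, |k (n + 1) y| ≤ C) :
    ∀ᵐ x : Fin n → Rd d,
      ENNReal.ofReal |DDelta d A B k n x| ≤ (n : ℝ≥0∞) * ENNReal.ofReal (B.avg * C) := by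
  filter_upwards [ae_snoc hK] with x hx
  unfold DDelta
  rw [abs_neg]
  have hS : ∀ z : Rd d, 0 ≤ ∑ i : Fin n, ∫ y, A.a (x i) y * B.b (x i) y z := fun z =>
    Finset.sum_nonneg fun i _ =>
      integral_nonneg fun y => mul_nonneg (A.nonneg _ _) (B.nonneg _ _ _)
  have hmeas : ∀ i : Fin n, Measurable (Function.uncurry fun z y : Rd d =>
      ENNReal.ofReal (A.a (x i) y * B.b (x i) y z)) := by
    intro i
    have hma : Measurable fun p : Rd d × Rd d => A.a (x i) p.2 :=
      A.measurable.comp (measurable_const.prodMk measurable_snd)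
    have hmb : Measurable fun p : Rd d × Rd d => B.b (x i) p.2 p.1 :=
      B.measurable.comp (measurable_const.prodMk (measurable_snd.prodMk measurable_fst))
    exact (hma.mul hmb).ennreal_ofReal
  calc ENNReal.ofReal |∫ z, (∑ i : Fin n, ∫ y, A.a (x i) y * B.b (x i) y z) *
          k (n + 1) (Fin.snoc x z)|
      ≤ ∫⁻ z, ‖(∑ i : Fin n, ∫ y, A.a (x i) y * B.b (x i) y z) *
          k (n + 1) (Fin.snoc x z)‖₊ := by
        rw [← Real.norm_eq_abs, ofReal_norm]
        exact enorm_integral_le_lintegral_enorm _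
    _ ≤ ∫⁻ z, (∑ i : Fin n, ∫⁻ y, ENNReal.ofReal (A.a (x i) y * B.b (x i) y z)) *
          ENNReal.ofReal C := by
        refine lintegral_mono_ae ?_
        filter_upwards [hx] with z hz
        rw [← enorm_eq_nnnorm, ← ofReal_norm, Real.norm_eq_abs, abs_mul, abs_of_nonneg (hS z),
          ENNReal.ofReal_mul (hS z)]
        refine mul_le_mul' ?_ (ENNReal.ofReal_le_ofReal hz)
        calc ENNReal.ofReal (∑ i : Fin n, ∫ y, A.a (x i) y * B.b (x i) y z)
            = ∑ i : Fin n, ENNReal.ofReal (∫ y, A.a (x i) y * B.b (x i) y z) :=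
              ENNReal.ofReal_sum_of_nonneg fun i _ =>
                integral_nonneg fun y => mul_nonneg (A.nonneg _ _) (B.nonneg _ _ _)
          _ ≤ ∑ i : Fin n, ∫⁻ y, ENNReal.ofReal (A.a (x i) y * B.b (x i) y z) :=
              Finset.sum_le_sum fun i _ => ofReal_integral_le _ _
                fun y => mul_nonneg (A.nonneg _ _) (B.nonneg _ _ _)
    _ = (∑ i : Fin n, ∫⁻ z, ∫⁻ y, ENNReal.ofReal (A.a (x i) y * B.b (x i) y z)) *
          ENNReal.ofReal C := by
        rw [lintegral_mul_const' _ _ ENNReal.ofReal_ne_top]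
        congr 1
        exact lintegral_finset_sum _ fun i _ => Measurable.lintegral_prod_right (hmeas i)
    _ ≤ (∑ _i : Fin n, ENNReal.ofReal B.avg) * ENNReal.ofReal C := by
        refine mul_le_mul_left (Finset.sum_le_sum fun i _ => ?_) _
        rw [lintegral_lintegral_swap (hmeas i).aemeasurable]
        calc ∫⁻ y, ∫⁻ z, ENNReal.ofReal (A.a (x i) y * B.b (x i) y z)
            = ∫⁻ y, ENNReal.ofReal (A.a (x i) y) * ∫⁻ z, ENNReal.ofReal (B.b (x i) y z) := by
              refine lintegral_congr fun y => ?_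
              simp_rw [ENNReal.ofReal_mul (A.nonneg _ _)]
              exact lintegral_const_mul' _ _ ENNReal.ofReal_ne_top
          _ ≤ ∫⁻ y, ENNReal.ofReal (A.a (x i) y) * ENNReal.ofReal B.avg := by
              refine lintegral_mono fun y => mul_le_mul_right ?_ _
              rw [← ofReal_integral_eq_lintegral_ofReal (B.integrable _ _)
                (Filter.Eventually.of_forall fun z => B.nonneg _ _ _)]
              exact ENNReal.ofReal_le_ofReal (B.int_le_avg _ _)
          _ = (∫⁻ y, ENNReal.ofReal (A.a (x i) y)) * ENNReal.ofReal B.avg :=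
              lintegral_mul_const' _ _ ENNReal.ofReal_ne_top
          _ ≤ 1 * ENNReal.ofReal B.avg := by
              refine mul_le_mul_left ?_ _
              rw [← ofReal_integral_eq_lintegral_ofReal (A.integrable' (x i))
                (Filter.Eventually.of_forall fun y => A.nonneg _ _)]
              calc ENNReal.ofReal (∫ y, A.a (x i) y) ≤ ENNReal.ofReal 1 :=
                    ENNReal.ofReal_le_ofReal (A.int_right_le_one (x i))
                _ = 1 := ENNReal.ofReal_one
          _ = ENNReal.ofReal B.avg := one_mul _
    _ = (n : ℝ≥0∞) * ENNReal.ofReal (B.avg * C) := by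
        rw [ENNReal.ofReal_mul B.avg_nonneg]
        simp [Finset.sum_const, nsmul_eq_mul, mul_assoc]

lemma real_keyC (avg ω ϑ'' ϑ Km : ℝ) (havg : 0 ≤ avg) (hω : 0 ≤ ω) (hKm : 0 ≤ Km)
    (hϑ : ϑ'' < ϑ) (n : ℕ) :
    Real.exp (-ϑ * n) *
        ((n : ℝ) * (avg * (Real.exp (ϑ'' * ((n : ℝ) + 1)) * Km)) +
          ω * n * (Real.exp (ϑ'' * n) * Km)) ≤
      (ω + avg * Real.exp ϑ) / (Real.exp 1 * (ϑ - ϑ'')) * Km := by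
  have hα : 0 < ϑ - ϑ'' := sub_pos.2 hϑ
  have hβ := mul_exp_neg_le (ϑ - ϑ'') n hα (Nat.cast_nonneg n)
  have hc1 : 0 ≤ avg * Real.exp ϑ'' + ω := by positivity
  have hc2 : avg * Real.exp ϑ'' + ω ≤ ω + avg * Real.exp ϑ := by
    have hee := Real.exp_le_exp.2 hϑ.le
    nlinarith
  calc Real.exp (-ϑ * n) *
        ((n : ℝ) * (avg * (Real.exp (ϑ'' * ((n : ℝ) + 1)) * Km)) +
          ω * n * (Real.exp (ϑ'' * n) * Km))
      = ((n : ℝ) * Real.exp (-((ϑ - ϑ'') * n))) * ((avg * Real.exp ϑ'' + ω) * Km) := by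
        rw [show ϑ'' * ((n : ℝ) + 1) = ϑ'' * n + ϑ'' by ring, Real.exp_add,
          show -((ϑ - ϑ'') * (n : ℝ)) = -ϑ * n + ϑ'' * n by ring, Real.exp_add]
        ring
    _ ≤ (1 / (Real.exp 1 * (ϑ - ϑ''))) * ((avg * Real.exp ϑ'' + ω) * Km) :=
        mul_le_mul_of_nonneg_right hβ (by positivity)
    _ ≤ (1 / (Real.exp 1 * (ϑ - ϑ''))) * ((ω + avg * Real.exp ϑ) * Km) :=
        mul_le_mul_of_nonneg_left (mul_le_mul_of_nonneg_right hc2 hKm) (by positivity)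
    _ = (ω + avg * Real.exp ϑ) / (Real.exp 1 * (ϑ - ϑ'')) * Km := by ring

lemma real_keyD (avg ϑ'' ϑ Km : ℝ) (havg : 0 ≤ avg) (hKm : 0 ≤ Km)
    (hϑ : ϑ'' < ϑ) (n : ℕ) :
    Real.exp (-ϑ * n) * ((n : ℝ) * (avg * (Real.exp (ϑ'' * ((n : ℝ) + 1)) * Km))) ≤
      avg * Real.exp ϑ / (Real.exp 1 * (ϑ - ϑ'')) * Km := by
  have hα : 0 < ϑ - ϑ'' := sub_pos.2 hϑ
  have hβ := mul_exp_neg_le (ϑ - ϑ'') n hα (Nat.cast_nonneg n)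
  have hc2 : avg * Real.exp ϑ'' ≤ avg * Real.exp ϑ :=
    mul_le_mul_of_nonneg_left (Real.exp_le_exp.2 hϑ.le) havg
  calc Real.exp (-ϑ * n) * ((n : ℝ) * (avg * (Real.exp (ϑ'' * ((n : ℝ) + 1)) * Km)))
      = ((n : ℝ) * Real.exp (-((ϑ - ϑ'') * n))) * ((avg * Real.exp ϑ'') * Km) := by
        rw [show ϑ'' * ((n : ℝ) + 1) = ϑ'' * n + ϑ'' by ring, Real.exp_add,
          show -((ϑ - ϑ'') * (n : ℝ)) = -ϑ * n + ϑ'' * n by ring, Real.exp_add]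
        ring
    _ ≤ (1 / (Real.exp 1 * (ϑ - ϑ''))) * ((avg * Real.exp ϑ'') * Km) :=
        mul_le_mul_of_nonneg_right hβ (by positivity)
    _ ≤ (1 / (Real.exp 1 * (ϑ - ϑ''))) * ((avg * Real.exp ϑ) * Km) :=
        mul_le_mul_of_nonneg_left (mul_le_mul_of_nonneg_right hc2 hKm) (by positivity)
    _ = avg * Real.exp ϑ / (Real.exp 1 * (ϑ - ϑ'')) * Km := by ring

end Aux

/-- Estimates (4.12): for `ϑ'' < ϑ` and `k ∈ K_{ϑ''}`,
`‖C^{Δ,ω} k‖_ϑ ≤ ((ω + ⟨b⟩e^ϑ)/(e(ϑ-ϑ''))) ‖k‖_{ϑ''}` and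
`‖D^Δ k‖_ϑ ≤ (⟨b⟩e^ϑ/(e(ϑ-ϑ''))) ‖k‖_{ϑ''}`, so that `C^{Δ,ω}` and `D^Δ`
define bounded operators from `K_{ϑ''}` to `K_ϑ` with these norm bounds. -/
theorem CDeltaOmega_DDelta_norm_bounds (d : ℕ) (hd : 1 ≤ d)
    (A : JumpKernel d) (B : RateKernel d) (ω : ℝ) (hω : 0 ≤ ω)
    (ϑ'' ϑ : ℝ) (hϑ : ϑ'' < ϑ) (k : CorrFun d) (hk : famNorm d k.k ϑ'' < ⊤) :
    famNorm d (CDeltaOmega d A B ω k.k) ϑ ≤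
      ENNReal.ofReal ((ω + B.avg * Real.exp ϑ) / (Real.exp 1 * (ϑ - ϑ''))) *
        famNorm d k.k ϑ'' ∧
    famNorm d (DDelta d A B k.k) ϑ ≤
      ENNReal.ofReal (B.avg * Real.exp ϑ / (Real.exp 1 * (ϑ - ϑ''))) *
        famNorm d k.k ϑ'' := by
  have hα : 0 < ϑ - ϑ'' := sub_pos.2 hϑ
  have havg := B.avg_nonneg
  set M := famNorm d k.k ϑ'' with hMdef
  have hM : M ≠ ⊤ := hk.ne
  set Km := M.toReal with hKmdef
  have hKm0 : 0 ≤ Km := ENNReal.toReal_nonneg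
  have hMK : ENNReal.ofReal Km = M := ENNReal.ofReal_toReal hM
  have hkb : ∀ m : ℕ, ∀ᵐ y : Fin m → Rd d, |k.k m y| ≤ Real.exp (ϑ'' * m) * Km := by
    intro m
    have h1 : ENNReal.ofReal (Real.exp (-ϑ'' * m)) * esssupAbs d m (k.k m) ≤ M := by
      rw [hMdef]
      unfold famNorm
      exact le_iSup (fun m : ℕ => ENNReal.ofReal (Real.exp (-ϑ'' * m)) * esssupAbs d m (k.k m)) m
    have ha0 : ENNReal.ofReal (Real.exp (-ϑ'' * m)) ≠ 0 := by
      simp [ENNReal.ofReal_eq_zero, not_le, Real.exp_pos]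
    have h2 : esssupAbs d m (k.k m) ≤ ENNReal.ofReal (Real.exp (ϑ'' * m) * Km) := by
      have h3 := (ENNReal.mul_le_iff_le_inv ha0 ENNReal.ofReal_ne_top).1 h1
      have hinv : (ENNReal.ofReal (Real.exp (-ϑ'' * m)))⁻¹ = ENNReal.ofReal (Real.exp (ϑ'' * m)) := by
        rw [← ENNReal.ofReal_inv_of_pos (Real.exp_pos _), ← Real.exp_neg,
          show -(-ϑ'' * (m : ℝ)) = ϑ'' * m by ring]
      rw [hinv, ← hMK, ← ENNReal.ofReal_mul (Real.exp_pos _).le] at h3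
      exact h3
    have h4 : ∀ᵐ y : Fin m → Rd d,
        ENNReal.ofReal |k.k m y| ≤ essSup (fun y => ENNReal.ofReal |k.k m y|) volume :=
      ENNReal.ae_le_essSup fun y => ENNReal.ofReal |k.k m y|
    rw [esssupAbs] at h2
    filter_upwards [h4] with y hy
    exact (ENNReal.ofReal_le_ofReal_iff (by positivity)).1 (hy.trans h2)
  constructor
  · -- the CDeltaOmega bound
    have hR0 : 0 ≤ (ω + B.avg * Real.exp ϑ) / (Real.exp 1 * (ϑ - ϑ'')) :=
      div_nonneg (add_nonneg hω (mul_nonneg havg (Real.exp_pos _).le)) (by positivity)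
    have key : ∀ n : ℕ, ENNReal.ofReal (Real.exp (-ϑ * n)) *
        esssupAbs d n (CDeltaOmega d A B ω k.k n) ≤
        ENNReal.ofReal ((ω + B.avg * Real.exp ϑ) / (Real.exp 1 * (ϑ - ϑ''))) * M := by
      intro n
      have hC10 : (0:ℝ) ≤ Real.exp (ϑ'' * ((n + 1 : ℕ) : ℝ)) * Km := by positivity
      have hE0 : (0:ℝ) ≤ (n : ℝ) * (B.avg * (Real.exp (ϑ'' * ((n + 1 : ℕ) : ℝ)) * Km)) :=
        mul_nonneg (Nat.cast_nonneg n) (mul_nonneg havg hC10)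
      have hae : ∀ᵐ x : Fin n → Rd d, ENNReal.ofReal |CDeltaOmega d A B ω k.k n x| ≤
          ENNReal.ofReal ((n : ℝ) * (B.avg * (Real.exp (ϑ'' * ((n + 1 : ℕ) : ℝ)) * Km)) +
            ω * n * (Real.exp (ϑ'' * n) * Km)) := by
        filter_upwards [cdelta_ae_bound A B k.k n hC10 (hkb (n + 1)), hkb n] with x h1 h2
        unfold CDeltaOmega
        calc ENNReal.ofReal |CDelta d A B k.k n x + ω * n * k.k n x|
            ≤ ENNReal.ofReal (|CDelta d A B k.k n x| + |ω * n * k.k n x|) :=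
              ENNReal.ofReal_le_ofReal (abs_add_le _ _)
          _ ≤ ENNReal.ofReal |CDelta d A B k.k n x| + ENNReal.ofReal |ω * n * k.k n x| :=
              ENNReal.ofReal_add_le
          _ ≤ (n : ℝ≥0∞) * ENNReal.ofReal (B.avg * (Real.exp (ϑ'' * ((n + 1 : ℕ) : ℝ)) * Km)) +
              ENNReal.ofReal (ω * n * (Real.exp (ϑ'' * n) * Km)) := by
              refine add_le_add h1 (ENNReal.ofReal_le_ofReal ?_)
              rw [abs_mul, abs_of_nonneg (mul_nonneg hω (Nat.cast_nonneg n))]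
              exact mul_le_mul_of_nonneg_left h2 (mul_nonneg hω (Nat.cast_nonneg n))
          _ = ENNReal.ofReal ((n : ℝ) * (B.avg * (Real.exp (ϑ'' * ((n + 1 : ℕ) : ℝ)) * Km)) +
              ω * n * (Real.exp (ϑ'' * n) * Km)) := by
              rw [← ENNReal.ofReal_natCast n, ← ENNReal.ofReal_mul (Nat.cast_nonneg n),
                ← ENNReal.ofReal_add hE0 (by positivity)]
      have hEss := esssupAbs_le (CDeltaOmega d A B ω k.k n) hae
      calc ENNReal.ofReal (Real.exp (-ϑ * n)) * esssupAbs d n (CDeltaOmega d A B ω k.k n)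
          ≤ ENNReal.ofReal (Real.exp (-ϑ * n)) *
            ENNReal.ofReal ((n : ℝ) * (B.avg * (Real.exp (ϑ'' * ((n + 1 : ℕ) : ℝ)) * Km)) +
              ω * n * (Real.exp (ϑ'' * n) * Km)) := mul_le_mul_right hEss _
        _ = ENNReal.ofReal (Real.exp (-ϑ * n) *
            ((n : ℝ) * (B.avg * (Real.exp (ϑ'' * ((n + 1 : ℕ) : ℝ)) * Km)) +
              ω * n * (Real.exp (ϑ'' * n) * Km))) :=
            (ENNReal.ofReal_mul (Real.exp_pos _).le).symm
        _ ≤ ENNReal.ofReal ((ω + B.avg * Real.exp ϑ) / (Real.exp 1 * (ϑ - ϑ'')) * Km) := by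
            refine ENNReal.ofReal_le_ofReal ?_
            have hcast : ((n + 1 : ℕ) : ℝ) = (n : ℝ) + 1 := by push_cast; ring
            rw [hcast]
            exact real_keyC B.avg ω ϑ'' ϑ Km havg hω hKm0 hϑ n
        _ = ENNReal.ofReal ((ω + B.avg * Real.exp ϑ) / (Real.exp 1 * (ϑ - ϑ''))) * M := by
            rw [ENNReal.ofReal_mul hR0, hMK]
    unfold famNorm
    exact iSup_le key
  · -- the DDelta bound
    have hR0 : 0 ≤ B.avg * Real.exp ϑ / (Real.exp 1 * (ϑ - ϑ'')) :=
      div_nonneg (mul_nonneg havg (Real.exp_pos _).le) (by positivity)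
    have key : ∀ n : ℕ, ENNReal.ofReal (Real.exp (-ϑ * n)) *
        esssupAbs d n (DDelta d A B k.k n) ≤
        ENNReal.ofReal (B.avg * Real.exp ϑ / (Real.exp 1 * (ϑ - ϑ''))) * M := by
      intro n
      have hC10 : (0:ℝ) ≤ Real.exp (ϑ'' * ((n + 1 : ℕ) : ℝ)) * Km := by positivity
      have hae : ∀ᵐ x : Fin n → Rd d, ENNReal.ofReal |DDelta d A B k.k n x| ≤
          ENNReal.ofReal ((n : ℝ) * (B.avg * (Real.exp (ϑ'' * ((n + 1 : ℕ) : ℝ)) * Km))) := by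
        filter_upwards [ddelta_ae_bound A B k.k n hC10 (hkb (n + 1))] with x h1
        calc ENNReal.ofReal |DDelta d A B k.k n x|
            ≤ (n : ℝ≥0∞) * ENNReal.ofReal (B.avg * (Real.exp (ϑ'' * ((n + 1 : ℕ) : ℝ)) * Km)) := h1
          _ = ENNReal.ofReal ((n : ℝ) * (B.avg * (Real.exp (ϑ'' * ((n + 1 : ℕ) : ℝ)) * Km))) := by
              rw [← ENNReal.ofReal_natCast n, ← ENNReal.ofReal_mul (Nat.cast_nonneg n)]
      have hEss := esssupAbs_le (DDelta d A B k.k n) hae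
      calc ENNReal.ofReal (Real.exp (-ϑ * n)) * esssupAbs d n (DDelta d A B k.k n)
          ≤ ENNReal.ofReal (Real.exp (-ϑ * n)) *
            ENNReal.ofReal ((n : ℝ) * (B.avg * (Real.exp (ϑ'' * ((n + 1 : ℕ) : ℝ)) * Km))) :=
            mul_le_mul_right hEss _
        _ = ENNReal.ofReal (Real.exp (-ϑ * n) *
            ((n : ℝ) * (B.avg * (Real.exp (ϑ'' * ((n + 1 : ℕ) : ℝ)) * Km)))) :=
            (ENNReal.ofReal_mul (Real.exp_pos _).le).symm
        _ ≤ ENNReal.ofReal (B.avg * Real.exp ϑ / (Real.exp 1 * (ϑ - ϑ'')) * Km) := by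
            refine ENNReal.ofReal_le_ofReal ?_
            have hcast : ((n + 1 : ℕ) : ℝ) = (n : ℝ) + 1 := by push_cast; ring
            rw [hcast]
            exact real_keyD B.avg ϑ'' ϑ Km havg hKm0 hϑ n
        _ = ENNReal.ofReal (B.avg * Real.exp ϑ / (Real.exp 1 * (ϑ - ϑ''))) * M := by
            rw [ENNReal.ofReal_mul hR0, hMK]
    unfold famNorm
    exact iSup_le key



end Kawasaki
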